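/- Let A ∈ ℝ^{m×n} have rank n with rows a_1ᵀ,…,a_mᵀ, let H := AᵀA, and for each j ∈ [m] set y_j := H^{−1/2} a_j and X_j := (1/p_j)·y_j y_jᵀ − I_n, where p ∈ (0,1]^m is a probability vector (∑_j p_j = 1) with p_j ≥ β·σ_j(A)/n for some 1 ≤ β ≤ n. Let J be a random index in [m] with law p. Then E[X_J] = 0, and 0 ⪯ E[X_Jᵀ X_J] ⪯ (n/β − 1)·I_n; in particular ‖E[X_Jᵀ X_J]‖ ≤ n/β − 1. -/

import Mathlib

open Matrix MeasureTheory
open scoped Classical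

/-- The leverage score of row `j` of `A`: `σ_j(A) = a_jᵀ (AᵀA)⁻¹ a_j`. -/
noncomputable def levScore {m n : ℕ} (A : Matrix (Fin m) (Fin n) ℝ) (j : Fin m) : ℝ :=
  A j ⬝ᵥ ((Aᵀ * A)⁻¹).mulVec (A j)

/-- The positive-semidefinite square root of a PSD matrix (junk value `0` otherwise). -/
noncomputable def psdSqrt {n : ℕ} (M : Matrix (Fin n) (Fin n) ℝ) : Matrix (Fin n) (Fin n) ℝ :=
  if h : M.PosSemidef then
    h.1.eigenvectorUnitary.1 * diagonal ((↑) ∘ (Real.sqrt ∘ h.1.eigenvalues)) *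
      (star h.1.eigenvectorUnitary : Matrix (Fin n) (Fin n) ℝ)
  else 0

/-- `y_j := H^{-1/2} a_j`, where `H = AᵀA`. -/
noncomputable def yVec {m n : ℕ} (A : Matrix (Fin m) (Fin n) ℝ) (j : Fin m) : Fin n → ℝ :=
  ((psdSqrt (Aᵀ * A))⁻¹).mulVec (A j)

/-- `X_j := (1/p_j) y_j y_jᵀ − I_n`. -/
noncomputable def Xmat {m n : ℕ} (A : Matrix (Fin m) (Fin n) ℝ) (p : Fin m → ℝ) (j : Fin m) :
    Matrix (Fin n) (Fin n) ℝ :=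
  (p j)⁻¹ • vecMulVec (yVec A j) (yVec A j) - 1

section Helpers

variable {m n : ℕ}

private lemma vmv_transpose (v w : Fin n → ℝ) : (vecMulVec v w)ᵀ = vecMulVec w v := by
  ext i k; simp [vecMulVec_apply, mul_comm]

private lemma vmv_conj (M : Matrix (Fin n) (Fin n) ℝ) (v w : Fin n → ℝ) :
    vecMulVec (M *ᵥ v) (M *ᵥ w) = M * vecMulVec v w * Mᵀ := by
  ext i k
  simp only [vecMulVec_apply, Matrix.mul_apply, mulVec, dotProduct, transpose_apply,
    Finset.sum_mul, Finset.mul_sum]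
  rw [Finset.sum_comm]
  conv_rhs => rw [Finset.sum_comm]
  exact Finset.sum_congr rfl fun b _ => Finset.sum_congr rfl fun a _ => by ring

private lemma sum_vmv_rows (A : Matrix (Fin m) (Fin n) ℝ) :
    ∑ j, vecMulVec (A j) (A j) = Aᵀ * A := by
  ext i k
  simp [Matrix.sum_apply, vecMulVec_apply, Matrix.mul_apply, transpose_apply, mul_comm]

private lemma vmv_mul_vmv (v w x y : Fin n → ℝ) :
    vecMulVec v w * vecMulVec x y = (w ⬝ᵥ x) • vecMulVec v y := by
  ext i k
  simp only [vecMulVec_apply, Matrix.mul_apply, dotProduct, Matrix.smul_apply, smul_eq_mul,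
    Finset.sum_mul, Finset.mul_sum]
  exact Finset.sum_congr rfl fun a _ => by ring

private lemma vmv_mulVec (v w x : Fin n → ℝ) : vecMulVec v w *ᵥ x = (w ⬝ᵥ x) • v := by
  ext i
  simp only [mulVec, vecMulVec_apply, dotProduct, Pi.smul_apply, smul_eq_mul, Finset.sum_mul]
  exact Finset.sum_congr rfl fun a _ => by ring

private lemma vmv_posSemidef (v : Fin n → ℝ) : (vecMulVec v v).PosSemidef := by
  refine PosSemidef.of_dotProduct_mulVec_nonneg ?_ fun x => ?_
  · ext i k; simp [conjTranspose_apply, vecMulVec_apply, mul_comm]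
  · rw [star_trivial, vmv_mulVec, dotProduct_smul, smul_eq_mul, dotProduct_comm]
    exact mul_self_nonneg _

private lemma psd_smul {M : Matrix (Fin n) (Fin n) ℝ} (hM : M.PosSemidef) {c : ℝ} (hc : 0 ≤ c) :
    (c • M).PosSemidef := by
  refine PosSemidef.of_dotProduct_mulVec_nonneg ?_ fun x => ?_
  · show (c • M)ᴴ = c • M
    rw [conjTranspose_smul, hM.1.eq]; simp
  · rw [smul_mulVec, dotProduct_smul, smul_eq_mul]
    exact mul_nonneg hc (hM.dotProduct_mulVec_nonneg x)

private lemma psd_sum {s : Finset (Fin m)} {f : Fin m → Matrix (Fin n) (Fin n) ℝ}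
    (h : ∀ j ∈ s, (f j).PosSemidef) : (∑ j ∈ s, f j).PosSemidef :=
  Finset.sum_induction f _ (fun _ _ ha hb => ha.add hb) Matrix.PosSemidef.zero h

private lemma herm_transpose {M : Matrix (Fin n) (Fin n) ℝ} (h : M.IsHermitian) : Mᵀ = M := by
  ext i k
  have := congrFun (congrFun h.eq i) k
  simpa [conjTranspose_apply] using this

private lemma psdSqrt_mul_self {M : Matrix (Fin n) (Fin n) ℝ} (h : M.PosSemidef) :
    psdSqrt M * psdSqrt M = M := by
  unfold psdSqrt
  rw [dif_pos h]
  have hU : (star h.1.eigenvectorUnitary : Matrix (Fin n) (Fin n) ℝ) * h.1.eigenvectorUnitary.1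
      = 1 := Unitary.coe_star_mul_self _
  have hD : diagonal ((↑) ∘ (Real.sqrt ∘ h.1.eigenvalues)) *
      diagonal ((↑) ∘ (Real.sqrt ∘ h.1.eigenvalues))
      = diagonal (RCLike.ofReal ∘ h.1.eigenvalues : Fin n → ℝ) := by
    rw [diagonal_mul_diagonal]
    congr 1
    ext i
    simp [Real.mul_self_sqrt (h.eigenvalues_nonneg i)]
  conv_rhs => rw [h.1.spectral_theorem, Unitary.conjStarAlgAut_apply]
  calc _ = h.1.eigenvectorUnitary.1 * (diagonal ((↑) ∘ (Real.sqrt ∘ h.1.eigenvalues)) *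
        ((star h.1.eigenvectorUnitary : Matrix (Fin n) (Fin n) ℝ) * h.1.eigenvectorUnitary.1) *
        diagonal ((↑) ∘ (Real.sqrt ∘ h.1.eigenvalues))) *
        (star h.1.eigenvectorUnitary : Matrix (Fin n) (Fin n) ℝ) := by
        simp only [Matrix.mul_assoc]
    _ = _ := by rw [hU, Matrix.mul_one, hD]

private lemma psdSqrt_posSemidef {M : Matrix (Fin n) (Fin n) ℝ} (h : M.PosSemidef) :
    (psdSqrt M).PosSemidef := by
  unfold psdSqrt
  rw [dif_pos h, Matrix.star_eq_conjTranspose]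
  refine (PosSemidef.diagonal fun i => ?_).mul_mul_conjTranspose_same _
  simp

end Helpers

/-- Since the random index `J` has law `p` on the finite set `[m]`, the expectations
`E[X_J]` and `E[X_Jᵀ X_J]` are the weighted sums `∑ j, p j • X j` and
`∑ j, p j • X jᵀ X j`. -/
theorem stmt9 {m n : ℕ} (A : Matrix (Fin m) (Fin n) ℝ) (hA : A.rank = n)
    (β : ℝ) (hβ1 : 1 ≤ β) (hβn : β ≤ n)
    (p : Fin m → ℝ) (hp : ∀ j, 0 < p j ∧ p j ≤ 1) (hsum : (∑ j, p j) = 1)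
    (hlev : ∀ j, β * levScore A j / n ≤ p j) :
    (∑ j, p j • Xmat A p j) = 0 ∧
    (∑ j, p j • ((Xmat A p j)ᵀ * Xmat A p j)).PosSemidef ∧
    ((n / β - 1) • (1 : Matrix (Fin n) (Fin n) ℝ) -
        ∑ j, p j • ((Xmat A p j)ᵀ * Xmat A p j)).PosSemidef ∧
    ‖toEuclideanCLM (𝕜 := ℝ) (n := Fin n)
        (∑ j, p j • ((Xmat A p j)ᵀ * Xmat A p j))‖ ≤ n / β - 1 := by
  classical
  have hβ0 : (0:ℝ) < β := lt_of_lt_of_le one_pos hβ1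
  have hn0 : (0:ℝ) < (n:ℝ) := lt_of_lt_of_le (lt_of_lt_of_le one_pos hβ1) hβn
  -- `AᵀA` is positive definite
  have hker : LinearMap.ker A.mulVecLin = ⊥ := by
    have h1 := LinearMap.finrank_range_add_finrank_ker A.mulVecLin
    rw [Matrix.rank] at hA
    rw [hA, Module.finrank_fin_fun] at h1
    have h0 : Module.finrank ℝ (LinearMap.ker A.mulVecLin) = 0 := by omega
    exact Submodule.finrank_eq_zero.mp h0
  have hinj : Function.Injective A.mulVecLin := LinearMap.ker_eq_bot.mp hker
  have hH : (Aᵀ * A).PosDef := by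
    refine PosDef.of_dotProduct_mulVec_pos (by simpa using Matrix.isHermitian_conjTranspose_mul_self A) fun x hx => ?_
    have hAx : A *ᵥ x ≠ 0 := by
      intro h
      exact hx (hinj (by simpa [Matrix.mulVecLin_apply] using h))
    have hq : star x ⬝ᵥ ((Aᵀ * A) *ᵥ x) = (A *ᵥ x) ⬝ᵥ (A *ᵥ x) := by
      rw [star_trivial, ← mulVec_mulVec, dotProduct_mulVec, vecMul_transpose]
    rw [hq]
    have h1 : (0:ℝ) ≤ (A *ᵥ x) ⬝ᵥ (A *ᵥ x) :=
      Finset.sum_nonneg fun i _ => mul_self_nonneg _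
    rcases h1.lt_or_eq with h | h
    · exact h
    · exact absurd ((dotProduct_self_eq_zero).mp h.symm) hAx
  have hHps : (Aᵀ * A).PosSemidef := hH.posSemidef
  set S : Matrix (Fin n) (Fin n) ℝ := psdSqrt (Aᵀ * A) with hSdef
  have hSeq : S = psdSqrt (Aᵀ * A) := by rw [hSdef]
  have hSps : S.PosSemidef := by rw [hSeq]; exact psdSqrt_posSemidef hHps
  have hSS : S * S = Aᵀ * A := by rw [hSeq]; exact psdSqrt_mul_self hHps
  have hSdet : IsUnit S.det := by
    have h2 : S.det * S.det = (Aᵀ * A).det := by rw [← det_mul, hSS]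
    have h3 := hH.det_pos
    refine isUnit_iff_ne_zero.mpr fun h => ?_
    rw [h, mul_zero] at h2
    exact absurd h2.symm (ne_of_gt h3)
  have hBt : S⁻¹ᵀ = S⁻¹ := by
    rw [transpose_nonsing_inv, herm_transpose hSps.1]
  have hy : ∀ j, yVec A j = S⁻¹ *ᵥ A j := fun j => by
    simp only [yVec, hSdef, mulVec]
  -- key identity : `∑ y_j y_jᵀ = 1`
  have hI : ∑ j, vecMulVec (yVec A j) (yVec A j) = (1 : Matrix (Fin n) (Fin n) ℝ) := by
    calc ∑ j, vecMulVec (yVec A j) (yVec A j)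
        = S⁻¹ * (∑ j, vecMulVec (A j) (A j)) * S⁻¹ᵀ := by
          rw [Finset.mul_sum, Finset.sum_mul]
          exact Finset.sum_congr rfl fun j _ => by rw [hy j, vmv_conj]
      _ = S⁻¹ * (S * S) * S⁻¹ := by rw [sum_vmv_rows, hBt, hSS]
      _ = (S⁻¹ * S) * (S * S⁻¹) := by rw [← mul_assoc S⁻¹ S S, mul_assoc (S⁻¹ * S)]
      _ = 1 := by rw [nonsing_inv_mul S hSdet, mul_nonsing_inv S hSdet, one_mul]
  -- the leverage scores are the squared norms of the `y_j`
  have hlev_eq : ∀ j, yVec A j ⬝ᵥ yVec A j = levScore A j := by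
    intro j
    rw [levScore, hy j, dotProduct_mulVec, ← hBt, vecMul_transpose, mulVec_mulVec, hBt,
      ← Matrix.mul_inv_rev, hSS]
    exact dotProduct_comm _ _
  have hlev0 : ∀ j, 0 ≤ levScore A j := by
    intro j
    rw [← hlev_eq j]
    exact Finset.sum_nonneg fun i _ => mul_self_nonneg _
  have hpj : ∀ j, p j ≠ 0 := fun j => ne_of_gt (hp j).1
  have hXsym : ∀ j, (Xmat A p j)ᵀ = Xmat A p j := fun j => by
    simp only [Xmat]
    rw [transpose_sub, transpose_smul, transpose_one, vmv_transpose]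
  have hXX : ∀ j, p j • ((Xmat A p j)ᵀ * Xmat A p j)
      = (levScore A j / p j) • vecMulVec (yVec A j) (yVec A j)
        - vecMulVec (yVec A j) (yVec A j)
        - (vecMulVec (yVec A j) (yVec A j) - p j • 1) := by
    intro j
    rw [hXsym j, ← hlev_eq j]
    simp only [Xmat, sub_mul, mul_sub, one_mul, mul_one, smul_mul_smul_comm, vmv_mul_vmv,
      smul_smul]
    have hp0 := hpj j
    match_scalars <;> field_simp <;> ring
  have hE : ∑ j, p j • ((Xmat A p j)ᵀ * Xmat A p j)
      = (∑ j, (levScore A j / p j) • vecMulVec (yVec A j) (yVec A j)) - 1 := by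
    simp only [hXX]
    rw [Finset.sum_sub_distrib, Finset.sum_sub_distrib, Finset.sum_sub_distrib, hI,
      ← Finset.sum_smul, hsum, one_smul]
    abel
  -- part 1
  have part1 : (∑ j, p j • Xmat A p j) = 0 := by
    have h1 : ∀ j : Fin m, p j • Xmat A p j
        = vecMulVec (yVec A j) (yVec A j) - p j • 1 := by
      intro j
      simp only [Xmat, smul_sub, smul_smul, mul_inv_cancel₀ (hpj j), one_smul]
    simp only [h1]
    rw [Finset.sum_sub_distrib, hI, ← Finset.sum_smul, hsum, one_smul, sub_self]
  -- part 2
  have hconj_tr : ∀ (M : Matrix (Fin n) (Fin n) ℝ), Mᴴ = Mᵀ := fun M => by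
    ext i k; simp [conjTranspose_apply]
  have part2 : (∑ j, p j • ((Xmat A p j)ᵀ * Xmat A p j)).PosSemidef := by
    refine psd_sum fun j _ => psd_smul ?_ (le_of_lt (hp j).1)
    have h := posSemidef_conjTranspose_mul_self (Xmat A p j)
    rwa [hconj_tr] at h
  -- part 3
  have hcoeff : ∀ j, 0 ≤ (n:ℝ)/β - levScore A j / p j := by
    intro j
    have h1 := hlev j
    have h2 := (hp j).1
    rw [sub_nonneg, div_le_div_iff₀ h2 hβ0]
    rw [div_le_iff₀ hn0] at h1
    nlinarith [hlev0 j]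
  have part3 : (((n:ℝ)/β - 1) • (1 : Matrix (Fin n) (Fin n) ℝ)
      - ∑ j, p j • ((Xmat A p j)ᵀ * Xmat A p j)).PosSemidef := by
    have key : ((n:ℝ)/β - 1) • (1 : Matrix (Fin n) (Fin n) ℝ)
        - ∑ j, p j • ((Xmat A p j)ᵀ * Xmat A p j)
        = ∑ j, ((n:ℝ)/β - levScore A j / p j) • vecMulVec (yVec A j) (yVec A j) := by
      rw [hE]
      simp only [sub_smul]
      rw [Finset.sum_sub_distrib, ← Finset.smul_sum, hI, one_smul]
      abel
    rw [key]
    exact psd_sum fun j _ => psd_smul (vmv_posSemidef _) (hcoeff j)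
  refine ⟨part1, part2, part3, ?_⟩
  -- part 4 : the norm bound
  have hc : (0:ℝ) ≤ (n:ℝ)/β - 1 := by
    rw [sub_nonneg]; exact (one_le_div hβ0).mpr hβn
  set c : ℝ := (n:ℝ)/β - 1 with hcdef
  set E : Matrix (Fin n) (Fin n) ℝ := ∑ j, p j • ((Xmat A p j)ᵀ * Xmat A p j) with hEdef
  have hEsym : Eᵀ = E := herm_transpose part2.1
  have hEE : (c • E - E * E).PosSemidef := by
    obtain ⟨R, hRps, hR⟩ : ∃ R : Matrix (Fin n) (Fin n) ℝ, R.PosSemidef ∧ R * R = E :=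
      ⟨psdSqrt E, psdSqrt_posSemidef part2, psdSqrt_mul_self part2⟩
    have heq : c • E - E * E = R * (c • 1 - E) * Rᴴ := by
      rw [hRps.1.eq, mul_sub, sub_mul, mul_smul_comm, mul_one, smul_mul_assoc, hR]
      congr 1
      rw [← hR]
      simp only [mul_assoc]
    rw [heq]
    exact part3.mul_mul_conjTranspose_same R
  have key2 : ∀ w : Fin n → ℝ, (E *ᵥ w) ⬝ᵥ (E *ᵥ w) ≤ c * c * (w ⬝ᵥ w) := by
    intro w
    have h1 := hEE.dotProduct_mulVec_nonneg w
    have h2 := part3.dotProduct_mulVec_nonneg w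
    rw [star_trivial, sub_mulVec, smul_mulVec, dotProduct_sub, dotProduct_smul,
      ← mulVec_mulVec, sub_nonneg, smul_eq_mul] at h1
    rw [star_trivial, sub_mulVec, smul_mulVec, dotProduct_sub, dotProduct_smul,
      sub_nonneg, smul_eq_mul, one_mulVec] at h2
    have h4 : (E *ᵥ w) ⬝ᵥ (E *ᵥ w) = w ⬝ᵥ (E *ᵥ (E *ᵥ w)) := by
      conv_rhs => rw [dotProduct_mulVec, ← hEsym, vecMul_transpose]
      rw [hEsym]
    rw [h4]
    calc w ⬝ᵥ (E *ᵥ (E *ᵥ w)) ≤ c * (w ⬝ᵥ (E *ᵥ w)) := h1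
      _ ≤ c * (c * (w ⬝ᵥ w)) := mul_le_mul_of_nonneg_left h2 hc
      _ = c * c * (w ⬝ᵥ w) := by ring
  refine ContinuousLinearMap.opNorm_le_bound _ hc fun x => ?_
  have happ : toEuclideanCLM (𝕜 := ℝ) (n := Fin n) E x
      = (WithLp.equiv 2 (Fin n → ℝ)).symm (E *ᵥ (WithLp.equiv 2 (Fin n → ℝ) x)) := by
    conv_lhs => rw [show x = (WithLp.equiv 2 (Fin n → ℝ)).symm (WithLp.equiv 2 (Fin n → ℝ) x)
      from rfl]
    rw [WithLp.equiv_symm_apply, toEuclideanCLM_toLp]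
  set v : Fin n → ℝ := WithLp.equiv 2 (Fin n → ℝ) x with hvdef
  rw [happ, EuclideanSpace.norm_eq, EuclideanSpace.norm_eq]
  have e1 : ∑ i, ‖(WithLp.equiv 2 (Fin n → ℝ)).symm (E *ᵥ v) i‖ ^ 2
      = (E *ᵥ v) ⬝ᵥ (E *ᵥ v) := by
    simp [dotProduct, Real.norm_eq_abs, sq_abs, sq]
  have e2 : ∑ i, ‖x i‖ ^ 2 = v ⬝ᵥ v := by
    simp [dotProduct, Real.norm_eq_abs, sq_abs, sq, hvdef]
  rw [e1, e2]
  calc Real.sqrt ((E *ᵥ v) ⬝ᵥ (E *ᵥ v)) ≤ Real.sqrt (c * c * (v ⬝ᵥ v)) :=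
        Real.sqrt_le_sqrt (key2 v)
    _ = c * Real.sqrt (v ⬝ᵥ v) := by
        rw [Real.sqrt_mul (mul_self_nonneg c), Real.sqrt_mul_self hc]
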